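/- The restricted optimal cost function Ĵ belongs to the set Ŵ; moreover, for every function J : X → [0,∞] satisfying 0 ≤ J ≤ c·Ĵ for some c > 0, one has E^π_{x₀}[J(x_k)] → 0 as k → ∞ for every (π,x₀) ∈ C, so that any such J with J(t)=0 and Ĵ ≤ J belongs to Ŵ. -/

import Mathlib

open scoped ENNReal
open Filter
open scoped Classical NNReal

/-- A stochastic shortest path (SSP) problem with state space `X`, control space `U`,
countable disturbance space `W`, a cost-free absorbing termination state `t`,
nonempty control constraint sets `Uc x ⊆ U`, disturbance distributions `P x u`,
system function `f`, and nonnegative (finite-valued) cost per stage `g`. -/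
structure SSP (X U W : Type*) [Countable W] where
  t : X
  Uc : X → Set U
  Uc_nonempty : ∀ x, (Uc x).Nonempty
  P : X → U → PMF W
  f : X → U → W → X
  g : X → U → W → ℝ≥0∞
  g_lt_top : ∀ x u w, g x u w < ⊤
  f_absorb : ∀ u ∈ Uc t, ∀ w, f t u w = t
  g_zero : ∀ u ∈ Uc t, ∀ w, g t u w = 0

namespace SSP

variable {X U W : Type*} [Countable W] (S : SSP X U W)

/-- A policy `π = (μ₀, μ₁, …)` is admissible if `μ_k(x) ∈ U(x)` for all `k, x`. -/
def IsPolicy (π : ℕ → X → U) : Prop := ∀ k x, π k x ∈ S.Uc x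

/-- Distribution of the state `x_k` after `k` steps under policy `π` starting from `x₀`. -/
noncomputable def stateDist (π : ℕ → X → U) (x₀ : X) : ℕ → PMF X
  | 0 => PMF.pure x₀
  | k + 1 => (stateDist π x₀ k).bind fun x => (S.P x (π k x)).map (S.f x (π k x))

/-- Expected value `E^π_{x₀}[J(x_k)]` of a nonnegative function along the trajectory. -/
noncomputable def expect (π : ℕ → X → U) (x₀ : X) (k : ℕ) (J : X → ℝ≥0∞) : ℝ≥0∞ :=
  ∑' x, S.stateDist π x₀ k x * J x

/-- Expected cost `E^π_{x₀}[g(x_k, μ_k(x_k), w_k)]` of the `k`-th stage. -/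
noncomputable def stageCost (π : ℕ → X → U) (x₀ : X) (k : ℕ) : ℝ≥0∞ :=
  S.expect π x₀ k fun x => ∑' w, S.P x (π k x) w * S.g x (π k x) w

/-- The cost `J_π(x₀) = Σ_{k≥0} E^π_{x₀}[g(x_k, μ_k(x_k), w_k)]` of a policy. -/
noncomputable def Jcost (π : ℕ → X → U) (x₀ : X) : ℝ≥0∞ :=
  ∑' k, S.stageCost π x₀ k

/-- `r_k(π, x₀)`: probability that `x_k ≠ t` under `π` starting from `x₀`. -/
noncomputable def r (π : ℕ → X → U) (x₀ : X) (k : ℕ) : ℝ≥0∞ :=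
  S.expect π x₀ k fun x => if x = S.t then 0 else 1

/-- `Σ_{k≥0} r_k(π,x₀)`: expected number of steps to reach the destination. -/
noncomputable def N (π : ℕ → X → U) (x₀ : X) : ℝ≥0∞ := ∑' k, S.r π x₀ k

/-- A policy is proper at `x` if it is admissible, `J_π(x) < ∞` and `Σ_k r_k(π,x) < ∞`. -/
def ProperAt (π : ℕ → X → U) (x : X) : Prop :=
  S.IsPolicy π ∧ S.Jcost π x < ⊤ ∧ S.N π x < ⊤

/-- The optimal cost function `J*`. -/
noncomputable def Jstar (x : X) : ℝ≥0∞ := ⨅ π ∈ {π | S.IsPolicy π}, S.Jcost π x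

/-- The restricted optimal cost function `Ĵ` over policies proper at `x`
(infimum over the empty set is `∞`). -/
noncomputable def Jhat (x : X) : ℝ≥0∞ := ⨅ π ∈ {π | S.ProperAt π x}, S.Jcost π x

/-- The effective domain `X̂ = {x | Ĵ(x) < ∞}` of `Ĵ`. -/
def Xhat : Set X := {x | S.Jhat x < ⊤}

/-- Expected `k`-th stage cost in the `δ`-perturbed problem (stage cost `g + δ` off `t`). -/
noncomputable def stageCostPert (δ : ℝ≥0∞) (π : ℕ → X → U) (x₀ : X) (k : ℕ) : ℝ≥0∞ :=
  S.expect π x₀ k fun x =>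
    ∑' w, S.P x (π k x) w * (S.g x (π k x) w + if x = S.t then 0 else δ)

/-- The cost `J_{π,δ}` of a policy in the `δ`-perturbed problem. -/
noncomputable def Jpert (δ : ℝ≥0∞) (π : ℕ → X → U) (x₀ : X) : ℝ≥0∞ :=
  ∑' k, S.stageCostPert δ π x₀ k

/-- The optimal cost function `Ĵ_δ` of the `δ`-perturbed problem. -/
noncomputable def JhatPert (δ : ℝ≥0∞) (x : X) : ℝ≥0∞ :=
  ⨅ π ∈ {π | S.IsPolicy π}, S.Jpert δ π x

/-- `Q J x u = E_{w∼P(·|x,u)}[g(x,u,w) + J(f(x,u,w))]`. -/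
noncomputable def Q (J : X → ℝ≥0∞) (x : X) (u : U) : ℝ≥0∞ :=
  ∑' w, S.P x u w * (S.g x u w + J (S.f x u w))

/-- The Bellman operator `(TJ)(x) = inf_{u ∈ U(x)} E[g(x,u,w) + J(f(x,u,w))]`. -/
noncomputable def bellman (J : X → ℝ≥0∞) (x : X) : ℝ≥0∞ := ⨅ u ∈ S.Uc x, S.Q J x u

/-- The tail policy `π_k = (μ_k, μ_{k+1}, …)`. -/
def tail (π : ℕ → X → U) (k : ℕ) : ℕ → X → U := fun m => π (k + m)

/-- The set `Ŵ` of functions `J` with `J(t) = 0`, `Ĵ ≤ J`, and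
`E^π_{x₀}[J(x_k)] → 0` for every pair `(π, x₀)` with `π` proper at `x₀`. -/
def What : Set (X → ℝ≥0∞) :=
  {J | J S.t = 0 ∧ S.Jhat ≤ J ∧
    ∀ π x₀, S.ProperAt π x₀ → Tendsto (fun k => S.expect π x₀ k J) atTop (nhds 0)}

/-- The set `B` of functions `J` with `J(t) = 0` that are bounded over `X̂`. -/
def Bset : Set (X → ℝ≥0∞) :=
  {J | J S.t = 0 ∧ (⨆ x ∈ S.Xhat, J x) < ⊤}

/-- A policy is uniformly proper if it is admissible and the expected number of steps
to reach the destination is uniformly bounded over `X̂`. -/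
def UniformlyProper (π : ℕ → X → U) : Prop :=
  S.IsPolicy π ∧ (⨆ x ∈ S.Xhat, S.N π x) < ⊤

/-- The cost per stage `g` is (uniformly) bounded over `X × U × W`. -/
def BoundedCost : Prop := ∃ b : ℝ≥0∞, b < ⊤ ∧ ∀ x u w, S.g x u w ≤ b

end SSP

namespace SSP

variable {X U W : Type*} [Countable W] (S : SSP X U W)

lemma stateDist_add (π : ℕ → X → U) (x₀ : X) (k m : ℕ) :
    S.stateDist π x₀ (k + m) =
      (S.stateDist π x₀ k).bind (fun x => S.stateDist (SSP.tail π k) x m) := by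
  induction m with
  | zero => simp [stateDist]
  | succ m ih =>
      show S.stateDist π x₀ ((k + m) + 1) = _
      rw [stateDist, ih, PMF.bind_bind]
      rfl

lemma expect_shift (π : ℕ → X → U) (x₀ : X) (k m : ℕ) (J : X → ℝ≥0∞) :
    S.expect π x₀ (k + m) J =
      ∑' x, S.stateDist π x₀ k x * S.expect (SSP.tail π k) x m J := by
  unfold expect
  rw [stateDist_add]
  simp only [PMF.bind_apply]
  calc ∑' y, (∑' x, S.stateDist π x₀ k x * S.stateDist (SSP.tail π k) x m y) * J y
      = ∑' y, ∑' x, S.stateDist π x₀ k x * (S.stateDist (SSP.tail π k) x m y * J y) := by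
        refine tsum_congr fun y => ?_
        rw [← ENNReal.tsum_mul_right]
        exact tsum_congr fun x => mul_assoc _ _ _
    _ = ∑' x, ∑' y, S.stateDist π x₀ k x * (S.stateDist (SSP.tail π k) x m y * J y) :=
        ENNReal.tsum_comm
    _ = ∑' x, S.stateDist π x₀ k x * ∑' y, S.stateDist (SSP.tail π k) x m y * J y := by
        simp only [ENNReal.tsum_mul_left]

lemma stageCost_shift (π : ℕ → X → U) (x₀ : X) (k m : ℕ) :
    S.stageCost π x₀ (k + m) =
      ∑' x, S.stateDist π x₀ k x * S.stageCost (SSP.tail π k) x m :=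
  S.expect_shift π x₀ k m _

lemma r_shift (π : ℕ → X → U) (x₀ : X) (k m : ℕ) :
    S.r π x₀ (k + m) = ∑' x, S.stateDist π x₀ k x * S.r (SSP.tail π k) x m :=
  S.expect_shift π x₀ k m _

lemma tail_Jcost (π : ℕ → X → U) (x₀ : X) (k : ℕ) :
    (∑' m, S.stageCost π x₀ (k + m)) =
      ∑' x, S.stateDist π x₀ k x * S.Jcost (SSP.tail π k) x := by
  simp only [stageCost_shift]
  rw [ENNReal.tsum_comm]
  simp only [Jcost, ENNReal.tsum_mul_left]

lemma tail_N (π : ℕ → X → U) (x₀ : X) (k : ℕ) :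
    (∑' m, S.r π x₀ (k + m)) =
      ∑' x, S.stateDist π x₀ k x * S.N (SSP.tail π k) x := by
  simp only [r_shift]
  rw [ENNReal.tsum_comm]
  simp only [N, ENNReal.tsum_mul_left]

lemma tail_sum_le_Jcost (π : ℕ → X → U) (x₀ : X) (k : ℕ) :
    (∑' m, S.stageCost π x₀ (k + m)) ≤ S.Jcost π x₀ :=
  ENNReal.tsum_comp_le_tsum_of_injective (add_right_injective k) _

lemma tail_sum_le_N (π : ℕ → X → U) (x₀ : X) (k : ℕ) :
    (∑' m, S.r π x₀ (k + m)) ≤ S.N π x₀ :=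
  ENNReal.tsum_comp_le_tsum_of_injective (add_right_injective k) _

lemma tail_properAt {π : ℕ → X → U} {x₀ : X} (hp : S.ProperAt π x₀) (k : ℕ) (x : X)
    (hx : S.stateDist π x₀ k x ≠ 0) : S.ProperAt (SSP.tail π k) x := by
  obtain ⟨hpol, hJ, hN⟩ := hp
  refine ⟨fun m y => hpol (k + m) y, ?_, ?_⟩
  · have h1 : S.stateDist π x₀ k x * S.Jcost (SSP.tail π k) x ≤ S.Jcost π x₀ :=
      calc S.stateDist π x₀ k x * S.Jcost (SSP.tail π k) x
          ≤ ∑' y, S.stateDist π x₀ k y * S.Jcost (SSP.tail π k) y := ENNReal.le_tsum x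
        _ = ∑' m, S.stageCost π x₀ (k + m) := (S.tail_Jcost π x₀ k).symm
        _ ≤ S.Jcost π x₀ := S.tail_sum_le_Jcost π x₀ k
    by_contra h
    rw [not_lt, top_le_iff] at h
    rw [h, ENNReal.mul_top hx] at h1
    exact absurd (top_le_iff.mp h1) hJ.ne
  · have h1 : S.stateDist π x₀ k x * S.N (SSP.tail π k) x ≤ S.N π x₀ :=
      calc S.stateDist π x₀ k x * S.N (SSP.tail π k) x
          ≤ ∑' y, S.stateDist π x₀ k y * S.N (SSP.tail π k) y := ENNReal.le_tsum x
        _ = ∑' m, S.r π x₀ (k + m) := (S.tail_N π x₀ k).symm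
        _ ≤ S.N π x₀ := S.tail_sum_le_N π x₀ k
    by_contra h
    rw [not_lt, top_le_iff] at h
    rw [h, ENNReal.mul_top hx] at h1
    exact absurd (top_le_iff.mp h1) hN.ne

lemma expect_Jhat_le (π : ℕ → X → U) (x₀ : X) (hp : S.ProperAt π x₀) (k : ℕ) :
    S.expect π x₀ k S.Jhat ≤ ∑' m, S.stageCost π x₀ (k + m) := by
  rw [tail_Jcost]
  refine ENNReal.tsum_le_tsum fun x => ?_
  by_cases hx : S.stateDist π x₀ k x = 0
  · simp [hx]
  · refine mul_le_mul_right ?_ _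
    exact iInf₂_le (SSP.tail π k) (S.tail_properAt hp k x hx)

lemma tendsto_expect_Jhat (π : ℕ → X → U) (x₀ : X) (hp : S.ProperAt π x₀) :
    Tendsto (fun k => S.expect π x₀ k S.Jhat) atTop (nhds 0) := by
  have htail : Tendsto (fun k => ∑' m, S.stageCost π x₀ (k + m)) atTop (nhds 0) := by
    have := ENNReal.tendsto_sum_nat_add (fun n => S.stageCost π x₀ n) hp.2.1.ne
    simpa [add_comm] using this
  exact tendsto_of_tendsto_of_tendsto_of_le_of_le tendsto_const_nhds htail
    (fun k => zero_le) (fun k => S.expect_Jhat_le π x₀ hp k)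

lemma Jhat_t_eq_zero : S.Jhat S.t = 0 := by
  classical
  set π₀ : ℕ → X → U := fun _ x => (S.Uc_nonempty x).choose with hπ₀
  have hpol : S.IsPolicy π₀ := fun k x => (S.Uc_nonempty x).choose_spec
  have hdist : ∀ k, S.stateDist π₀ S.t k = PMF.pure S.t := by
    intro k
    induction k with
    | zero => rfl
    | succ k ih =>
        rw [stateDist, ih, PMF.pure_bind]
        have hf : S.f S.t (π₀ k S.t) = fun _ => S.t := by
          funext w; exact S.f_absorb _ (hpol k S.t) w
        rw [hf]
        ext y
        simp only [PMF.map_apply, PMF.pure_apply]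
        by_cases h : y = S.t
        · simp [h, (S.P S.t (π₀ k S.t)).tsum_coe]
        · simp [h]
  have hexp : ∀ k (J : X → ℝ≥0∞), S.expect π₀ S.t k J = J S.t := by
    intro k J
    rw [expect, hdist k]
    rw [show (∑' x, (PMF.pure S.t) x * J x) = ∑' x, if x = S.t then J S.t else 0 by
      refine tsum_congr fun x => ?_
      by_cases h : x = S.t <;> simp [PMF.pure_apply, h]]
    exact tsum_ite_eq S.t (fun _ => J S.t)
  have hproper : S.ProperAt π₀ S.t := by
    refine ⟨hpol, ?_, ?_⟩
    · have hg : ∀ k w, S.g S.t (π₀ k S.t) w = 0 := fun k w => S.g_zero _ (hpol k S.t) w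
      have : S.Jcost π₀ S.t = 0 := by
        simp only [Jcost, stageCost, hexp]
        simp [hg]
      simp [this]
    · have : S.N π₀ S.t = 0 := by
        simp only [N, r, hexp]
        simp
      simp [this]
  have hle : S.Jhat S.t ≤ S.Jcost π₀ S.t := iInf₂_le π₀ hproper
  have hg : ∀ k w, S.g S.t (π₀ k S.t) w = 0 := fun k w => S.g_zero _ (hpol k S.t) w
  have hJ0 : S.Jcost π₀ S.t = 0 := by
    simp only [Jcost, stageCost, hexp]
    simp [hg]
  exact le_antisymm (hJ0 ▸ hle) (zero_le)

end SSP

/-- `Ĵ ∈ Ŵ`; moreover every `J` with `0 ≤ J ≤ c·Ĵ` for some `c > 0`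
satisfies `E^π_{x₀}[J(x_k)] → 0` for all `(π,x₀) ∈ C`, so that any such `J` with
`J(t) = 0` and `Ĵ ≤ J` belongs to `Ŵ`. -/
theorem Jhat_mem_What {X U W : Type*} [Countable W] (S : SSP X U W) :
    S.Jhat ∈ S.What ∧
    ∀ J : X → ℝ≥0∞, (∃ c : ℝ≥0, 0 < c ∧ ∀ x, J x ≤ (c : ℝ≥0∞) * S.Jhat x) →
      ((∀ π x₀, S.ProperAt π x₀ →
          Tendsto (fun k => S.expect π x₀ k J) atTop (nhds 0)) ∧
        (J S.t = 0 → S.Jhat ≤ J → J ∈ S.What)) := by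
  constructor
  · exact ⟨S.Jhat_t_eq_zero, le_refl _, fun π x₀ hp => S.tendsto_expect_Jhat π x₀ hp⟩
  · rintro J ⟨c, hc, hle⟩
    have htend : ∀ π x₀, S.ProperAt π x₀ →
        Tendsto (fun k => S.expect π x₀ k J) atTop (nhds 0) := by
      intro π x₀ hp
      have hub : ∀ k, S.expect π x₀ k J ≤ (c : ℝ≥0∞) * S.expect π x₀ k S.Jhat := by
        intro k
        calc S.expect π x₀ k J ≤ ∑' x, S.stateDist π x₀ k x * ((c : ℝ≥0∞) * S.Jhat x) :=
              ENNReal.tsum_le_tsum fun x => mul_le_mul_right (hle x) _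
          _ = (c : ℝ≥0∞) * S.expect π x₀ k S.Jhat := by
              rw [SSP.expect, ← ENNReal.tsum_mul_left]
              exact tsum_congr fun x => by ring
      have hc' : Tendsto (fun k => (c : ℝ≥0∞) * S.expect π x₀ k S.Jhat) atTop (nhds 0) := by
        have := ENNReal.Tendsto.const_mul (a := (c : ℝ≥0∞)) (S.tendsto_expect_Jhat π x₀ hp)
          (Or.inr ENNReal.coe_ne_top)
        simpa using this
      exact tendsto_of_tendsto_of_tendsto_of_le_of_le tendsto_const_nhds hc'
        (fun k => zero_le) hub
    exact ⟨htend, fun h0 hge => ⟨h0, hge, htend⟩⟩
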